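/- Let Q and Q' be commutative rings, f_1,…,f_c a Q-regular sequence, f'_1,…,f'_{c'} a Q'-regular sequence, R = Q/(f_1,…,f_c) and R' = Q'/(f'_1,…,f'_{c'}). Let α : Q → Q' be a ring homomorphism with α(f_i) = Σ_{j=1}^{c'} a_{ij} f'_j for elements a_{ij} ∈ Q', so that α induces a ring homomorphism R → R'. Let C be a chain complex of R-modules with lift (C̃, d̃) and maps t̃_i satisfying d̃∘d̃ = Σ_i f_i·t̃_i, and Eisenbud operators t_i = t̃_i ⊗_Q R. Consider the R'-complex C' = R' ⊗_R C, which has the lift (Q' ⊗_Q C̃, 1⊗d̃) over Q'. Then for any Q'-linear maps ũ_j : Q' ⊗_Q C̃_n → Q' ⊗_Q C̃_{n−2} satisfying (1⊗d̃)_{n−1}∘(1⊗d̃)_n = Σ_{j=1}^{c'} f'_j·ũ_{j,n}, the operators u_j = ũ_j ⊗_{Q'} R' on C' are homotopic to Σ_{i=1}^c a_{ij}·(R' ⊗_R t_i): there exist R'-linear maps λ_n : C'_n → C'_{n−1} with u_{j,n} − Σ_i a_{ij}(R'⊗t_i)_n = d^{C'}_{n−1}∘λ_n + λ_{n−1}∘d^{C'}_n.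 -/

import Mathlib

/-!
Statement 8 (Eisenbud, change of rings): let `α : Q → Q'` (encoded as an algebra
structure) carry the regular sequence `f₁,…,f_c` of `Q` into the ideal generated by the
regular sequence `f'₁,…,f'_{c'}` of `Q'`, say `α(fᵢ) = Σⱼ aᵢⱼ f'ⱼ`.  If `C` is a complex
over `R = Q/(f)` with lift `(C̃, d̃)` and operators `t̃ᵢ`, then the base-changed complex
`C' = R' ⊗ C` over `R' = Q'/(f')` has the lift `(Q' ⊗[Q] C̃, 1 ⊗ d̃)`, and for any maps
`ũⱼ` with `(1⊗d̃)² = Σⱼ f'ⱼ • ũⱼ`, the operator `uⱼ = ũⱼ ⊗ R'` is homotopic to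
`Σᵢ aᵢⱼ • (R' ⊗ tᵢ)`.
-/

open TensorProduct

set_option maxHeartbeats 1000000

namespace EisenbudAux

variable {R : Type*} [CommRing R] {P : Type*} [AddCommGroup P] [Module R P]

lemma mem_smul_top_iff_repr {ι : Type*} (b : Module.Basis ι R P) (I : Ideal R) (y : P) :
    y ∈ (I • ⊤ : Submodule R P) ↔ ∀ i, b.repr y i ∈ I := by
  constructor
  · intro hy i
    have h1 : b.coord i y ∈ Submodule.map (b.coord i) (I • (⊤ : Submodule R P)) :=
      Submodule.mem_map_of_mem hy
    rw [Submodule.map_smul''] at h1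
    have h2 : I • Submodule.map (b.coord i) ⊤ ≤ I • (⊤ : Submodule R R) :=
      Submodule.smul_mono le_rfl le_top
    have h3 := h2 h1
    simpa [Ideal.smul_eq_mul, Ideal.mul_top, Module.Basis.coord_apply] using h3
  · intro h
    rw [← b.linearCombination_repr y, Finsupp.linearCombination_apply, Finsupp.sum]
    exact Submodule.sum_mem _ fun i _ => Submodule.smul_mem_smul (h i) Submodule.mem_top

lemma step {ι : Type*} (b : Module.Basis ι R P) {r : R} {J : Ideal R}
    (hr : IsSMulRegular (R ⧸ (J • ⊤ : Submodule R R)) r)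
    {y : P} (hy : r • y ∈ (J • ⊤ : Submodule R P)) : y ∈ (J • ⊤ : Submodule R P) := by
  rw [mem_smul_top_iff_repr b] at hy ⊢
  intro i
  have h1 : r * b.repr y i ∈ J := by simpa [smul_eq_mul] using hy i
  have hJtop : (J • ⊤ : Submodule R R) = J := by
    rw [Ideal.smul_eq_mul, Ideal.mul_top]
  have h2 : r • (Submodule.Quotient.mk (b.repr y i) : R ⧸ (J • ⊤ : Submodule R R)) =
      r • (0 : R ⧸ (J • ⊤ : Submodule R R)) := by
    rw [smul_zero, ← Submodule.Quotient.mk_smul, Submodule.Quotient.mk_eq_zero, hJtop]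
    simpa [smul_eq_mul] using h1
  have h3 := hr h2
  rw [Submodule.Quotient.mk_eq_zero, hJtop] at h3
  exact h3

lemma mem_span_range_smul_top_iff {m : ℕ} (g : Fin m → R) (y : P) :
    y ∈ (Ideal.span (Set.range g) • ⊤ : Submodule R P) ↔
      ∃ q : Fin m → P, y = ∑ j, g j • q j := by
  constructor
  · intro hy
    refine Submodule.smul_induction_on hy ?_ ?_
    · intro r hr x _
      obtain ⟨cf, hc⟩ := Submodule.mem_span_range_iff_exists_fun R |>.mp hr
      refine ⟨fun j => cf j • x, ?_⟩
      rw [← hc, Finset.sum_smul]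
      exact Finset.sum_congr rfl fun j _ => by
        rw [smul_smul, smul_eq_mul, mul_comm]
    · rintro x y ⟨q1, rfl⟩ ⟨q2, rfl⟩
      exact ⟨q1 + q2, by simp [smul_add, Finset.sum_add_distrib]⟩
  · rintro ⟨q, rfl⟩
    exact Submodule.sum_mem _ fun j _ =>
      Submodule.smul_mem_smul (Ideal.subset_span ⟨j, rfl⟩) Submodule.mem_top

lemma relations : ∀ (m : ℕ) (g : Fin m → R) (p : Fin m → P),
    (∀ (j : Fin m) (y : P),
      g j • y ∈ (Ideal.span (g '' {j' | j' < j}) • ⊤ : Submodule R P) →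
      y ∈ (Ideal.span (g '' {j' | j' < j}) • ⊤ : Submodule R P)) →
    (∑ j, g j • p j = 0) → ∀ j : Fin m,
    p j ∈ (Ideal.span (Set.range g) • ⊤ : Submodule R P) := by
  intro m
  induction m with
  | zero => exact fun g p _ _ j => j.elim0
  | succ m ih =>
    intro g p Hreg hsum j
    have hset : g '' {j' | j' < Fin.last m} = Set.range (g ∘ Fin.castSucc) := by
      ext x
      constructor
      · rintro ⟨j', hj', rfl⟩
        obtain ⟨k, rfl⟩ := Fin.exists_castSucc_eq.mpr (Fin.ne_last_of_lt hj')
        exact ⟨k, rfl⟩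
      · rintro ⟨k, rfl⟩
        exact ⟨Fin.castSucc k, Fin.castSucc_lt_last k, rfl⟩
    have hlast : p (Fin.last m) ∈
        (Ideal.span (Set.range (g ∘ Fin.castSucc)) • ⊤ : Submodule R P) := by
      rw [← hset]
      apply Hreg
      have heq : g (Fin.last m) • p (Fin.last m) =
          - ∑ k : Fin m, g (Fin.castSucc k) • p (Fin.castSucc k) := by
        rw [Fin.sum_univ_castSucc] at hsum
        exact eq_neg_of_add_eq_zero_right hsum
      rw [hset, heq]
      exact Submodule.neg_mem _ (Submodule.sum_mem _ fun k _ =>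
        Submodule.smul_mem_smul (Ideal.subset_span ⟨k, rfl⟩) Submodule.mem_top)
    obtain ⟨q, hq⟩ := (mem_span_range_smul_top_iff (g ∘ Fin.castSucc) _).mp hlast
    set p' : Fin m → P := fun k => p (Fin.castSucc k) + g (Fin.last m) • q k with hp'
    have hsum' : ∑ k, (g ∘ Fin.castSucc) k • p' k = 0 := by
      have expand : ∑ k, (g ∘ Fin.castSucc) k • p' k =
          (∑ k, g (Fin.castSucc k) • p (Fin.castSucc k)) +
            g (Fin.last m) • ∑ k, (g ∘ Fin.castSucc) k • q k := by
        rw [Finset.smul_sum, ← Finset.sum_add_distrib]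
        refine Finset.sum_congr rfl fun k _ => ?_
        simp only [hp', Function.comp_apply, smul_add]
        rw [smul_comm]
      rw [expand, ← hq, Fin.sum_univ_castSucc] at *
      exact hsum
    have Hreg' : ∀ (k : Fin m) (y : P),
        (g ∘ Fin.castSucc) k • y ∈
          (Ideal.span ((g ∘ Fin.castSucc) '' {k' | k' < k}) • ⊤ : Submodule R P) →
        y ∈ (Ideal.span ((g ∘ Fin.castSucc) '' {k' | k' < k}) • ⊤ : Submodule R P) := by
      intro k y
      have hset2 : (g ∘ Fin.castSucc) '' {k' | k' < k} = g '' {j' | j' < Fin.castSucc k} := by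
        ext x
        constructor
        · rintro ⟨k', hk', rfl⟩
          exact ⟨Fin.castSucc k', Fin.castSucc_lt_castSucc_iff.mpr hk', rfl⟩
        · rintro ⟨j', hj', rfl⟩
          have hne : j' ≠ Fin.last m :=
            Fin.ne_last_of_lt (lt_of_lt_of_le hj' (Fin.le_last _))
          obtain ⟨k', rfl⟩ := Fin.exists_castSucc_eq.mpr hne
          exact ⟨k', Fin.castSucc_lt_castSucc_iff.mp hj', rfl⟩
      rw [hset2]
      exact Hreg (Fin.castSucc k) y
    have hmem := fun k => ih (g ∘ Fin.castSucc) p' Hreg' hsum' k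
    have hsub : (Ideal.span (Set.range (g ∘ Fin.castSucc)) • ⊤ : Submodule R P) ≤
        Ideal.span (Set.range g) • ⊤ :=
      Submodule.smul_mono (Ideal.span_mono (by rintro x ⟨k, rfl⟩; exact ⟨Fin.castSucc k, rfl⟩))
        le_rfl
    refine Fin.lastCases ?_ ?_ j
    · exact hsub hlast
    · intro k
      have hpk : p (Fin.castSucc k) = p' k - g (Fin.last m) • q k := by simp [hp']
      rw [hpk]
      exact Submodule.sub_mem _ (hsub (hmem k))
        (Submodule.smul_mem_smul (Ideal.subset_span ⟨Fin.last m, rfl⟩) Submodule.mem_top)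


lemma takespan {m : ℕ} (f' : Fin m → R) (j : Fin m) :
    Ideal.ofList ((List.ofFn f').take j.1) = Ideal.span (f' '' {j' | j' < j}) := by
  have hset : {r | r ∈ (List.ofFn f').take j.1} = f' '' {j' | j' < j} := by
    ext x
    rw [Set.mem_setOf_eq, List.mem_take_iff_getElem]
    constructor
    · rintro ⟨k, hk, rfl⟩
      have hk' : k < m := lt_of_lt_of_le hk (by simp)
      have hkj : k < j.1 := lt_of_lt_of_le hk (by simp)
      exact ⟨⟨k, hk'⟩, hkj, by simp⟩
    · rintro ⟨j', hj', rfl⟩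
      refine ⟨j'.1, ?_, ?_⟩
      · simp only [List.length_ofFn]
        exact lt_min hj' j'.isLt
      · simp
  show Ideal.span _ = _
  rw [hset]

lemma hreg_module {m : ℕ} {f' : Fin m → R}
    (hreg : RingTheory.Sequence.IsWeaklyRegular R (List.ofFn f'))
    {ι : Type*} (b : Module.Basis ι R P) (j : Fin m) (y : P)
    (hy : f' j • y ∈ (Ideal.span (f' '' {j' | j' < j}) • ⊤ : Submodule R P)) :
    y ∈ (Ideal.span (f' '' {j' | j' < j}) • ⊤ : Submodule R P) := by
  have h := hreg.regular_mod_prev j.1 (by simp)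
  rw [takespan] at h
  simp only [List.getElem_ofFn, Fin.eta] at h
  exact step b h hy

lemma one_tmul_eq_zero {m : ℕ} (f' : Fin m → R) {y : P}
    (hy : y ∈ (Ideal.span (Set.range f') • ⊤ : Submodule R P)) :
    (1 : R ⧸ Ideal.span (Set.range f')) ⊗ₜ[R] y =
      (0 : (R ⧸ Ideal.span (Set.range f')) ⊗[R] P) := by
  refine Submodule.smul_induction_on hy ?_ ?_
  · intro r hr x _
    rw [tmul_smul, smul_tmul', ← Algebra.algebraMap_eq_smul_one,
      Ideal.Quotient.algebraMap_eq, Ideal.Quotient.eq_zero_iff_mem.mpr hr, zero_tmul]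
  · intro x y hx hy
    rw [tmul_add, hx, hy, add_zero]

end EisenbudAux


/-- The quotient ring by the ideal generated by a finite sequence. -/
abbrev Rquot (Q : Type) [CommRing Q] {c : ℕ} (f : Fin c → Q) : Type :=
  Q ⧸ Ideal.span (Set.range f)

/-- behaviour of Eisenbud operators under change of rings. -/
theorem eisenbud_operators_change_of_rings
    (Q Q' : Type) [CommRing Q] [CommRing Q'] [Algebra Q Q']
    (c c' : ℕ) (f : Fin c → Q) (f' : Fin c' → Q')
    (hreg : RingTheory.Sequence.IsRegular Q (List.ofFn f))
    (hreg' : RingTheory.Sequence.IsRegular Q' (List.ofFn f'))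
    (a : Fin c → Fin c' → Q')
    (ha : ∀ i : Fin c, algebraMap Q Q' (f i) = ∑ j, a i j * f' j)
    (Ct : ℤ → Type) [∀ n, AddCommGroup (Ct n)] [∀ n, Module Q (Ct n)]
    (hfree : ∀ n, Module.Free Q (Ct n)) (hfin : ∀ n, Module.Finite Q (Ct n))
    (dt : ∀ n : ℤ, Ct (n + 1) →ₗ[Q] Ct n)
    (tt : Fin c → ∀ n : ℤ, Ct (n + 1 + 1) →ₗ[Q] Ct n)
    (hdd : ∀ (n : ℤ) (x : Ct (n + 1 + 1)),
      dt n (dt (n + 1) x) = ∑ i, f i • tt i n x)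
    -- maps `ũⱼ` decomposing the square of the lifted differential `1 ⊗ d̃` of `C'`
    (uu : Fin c' → ∀ n : ℤ, (Q' ⊗[Q] Ct (n + 1 + 1)) →ₗ[Q'] (Q' ⊗[Q] Ct n))
    (huu : ∀ (n : ℤ) (x : Q' ⊗[Q] Ct (n + 1 + 1)),
      (dt n).baseChange Q' ((dt (n + 1)).baseChange Q' x) = ∑ j, f' j • uu j n x) :
    ∀ j : Fin c',
      ∃ lam : ∀ n : ℤ,
          (Rquot Q' f' ⊗[Q'] (Q' ⊗[Q] Ct (n + 1))) →ₗ[Rquot Q' f']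
            (Rquot Q' f' ⊗[Q'] (Q' ⊗[Q] Ct n)),
        ∀ (n : ℤ) (x : Rquot Q' f' ⊗[Q'] (Q' ⊗[Q] Ct (n + 1 + 1))),
          (uu j n).baseChange (Rquot Q' f') x -
              ∑ i, algebraMap Q' (Rquot Q' f') (a i j) •
                ((tt i n).baseChange Q').baseChange (Rquot Q' f') x =
            ((dt n).baseChange Q').baseChange (Rquot Q' f') (lam (n + 1) x) +
              lam n (((dt (n + 1)).baseChange Q').baseChange (Rquot Q' f') x) := by
  intro j
  refine ⟨fun n => 0, ?_⟩
  intro n x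
  simp only [LinearMap.zero_apply, map_zero, add_zero]
  haveI := hfree n
  have hdd' : ∀ w : Q' ⊗[Q] Ct (n + 1 + 1),
      (dt n).baseChange Q' ((dt (n + 1)).baseChange Q' w) =
        ∑ i, algebraMap Q Q' (f i) • (tt i n).baseChange Q' w := by
    intro w
    induction w using TensorProduct.induction_on with
    | zero => simp
    | tmul q v =>
      simp only [LinearMap.baseChange_tmul]
      rw [hdd n v, tmul_sum]
      exact Finset.sum_congr rfl fun i _ => by rw [tmul_smul, algebraMap_smul]
    | add w1 w2 h1 h2 =>
      simp only [map_add, h1, h2, smul_add, Finset.sum_add_distrib]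
  have key : ∀ w : Q' ⊗[Q] Ct (n + 1 + 1),
      (uu j n w - ∑ i, a i j • (tt i n).baseChange Q' w) ∈
        (Ideal.span (Set.range f') • ⊤ : Submodule Q' (Q' ⊗[Q] Ct n)) := by
    intro w
    have e1 : ∑ j' : Fin c', f' j' • uu j' n w
        = ∑ i, algebraMap Q Q' (f i) • (tt i n).baseChange Q' w :=
      (huu n w).symm.trans (hdd' w)
    have e2 : ∑ j' : Fin c', f' j' • ∑ i, a i j' • (tt i n).baseChange Q' w
        = ∑ i, algebraMap Q Q' (f i) • (tt i n).baseChange Q' w := by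
      simp_rw [Finset.smul_sum, smul_smul]
      rw [Finset.sum_comm]
      refine Finset.sum_congr rfl fun i _ => ?_
      rw [ha i, ← Finset.sum_smul]
      congr 1
      exact Finset.sum_congr rfl fun j' _ => mul_comm _ _
    have hsum : ∑ j' : Fin c', f' j' •
        (uu j' n w - ∑ i, a i j' • (tt i n).baseChange Q' w) = 0 := by
      simp only [smul_sub]
      rw [Finset.sum_sub_distrib, e1, e2, sub_self]
    exact EisenbudAux.relations c' f'
      (fun j' => uu j' n w - ∑ i, a i j' • (tt i n).baseChange Q' w)
      (fun j' y hy => EisenbudAux.hreg_module hreg'.toIsWeaklyRegular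
        (Module.Free.chooseBasis Q' (Q' ⊗[Q] Ct n)) j' y hy)
      hsum j
  induction x using TensorProduct.induction_on with
  | zero => simp
  | tmul r w =>
    have h0 := EisenbudAux.one_tmul_eq_zero f' (key w)
    have expand : (1 : Rquot Q' f') ⊗ₜ[Q'] (uu j n w - ∑ i, a i j • (tt i n).baseChange Q' w)
        = (1 : Rquot Q' f') ⊗ₜ[Q'] (uu j n w)
          - ∑ i, algebraMap Q' (Rquot Q' f') (a i j) •
              ((1 : Rquot Q' f') ⊗ₜ[Q'] ((tt i n).baseChange Q' w)) := by
      rw [tmul_sub, tmul_sum]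
      congr 1
      exact Finset.sum_congr rfl fun i _ => by rw [tmul_smul, algebraMap_smul]
    have hmain : (uu j n).baseChange (Rquot Q' f') (r ⊗ₜ w) -
        ∑ i, algebraMap Q' (Rquot Q' f') (a i j) •
          ((tt i n).baseChange Q').baseChange (Rquot Q' f') (r ⊗ₜ w)
        = r • ((1 : Rquot Q' f') ⊗ₜ[Q'] (uu j n w -
            ∑ i, a i j • (tt i n).baseChange Q' w)) := by
      rw [expand, smul_sub, Finset.smul_sum]
      simp only [LinearMap.baseChange_tmul]
      congr 1
      · rw [smul_tmul', smul_eq_mul, mul_one]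
      · refine Finset.sum_congr rfl fun i _ => ?_
        simp only [smul_tmul', smul_eq_mul, mul_one]
        rw [mul_comm]
    rw [hmain, h0, smul_zero]
  | add x y hx hy =>
    simp only [map_add, smul_add, Finset.sum_add_distrib]
    rw [add_sub_add_comm, hx, hy, add_zero]
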